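/- Assume that μ ≪ μ_𝒮 ⊗ μ_ℋ with KL(μ ‖ μ_𝒮 ⊗ μ_ℋ) < ∞, that for μ_ℋ-a.e. h the measures q(h) and κ(h) are mutually absolutely continuous with κ(h) ≪ μ_𝒮, and that the function G(s,h) = (1/n)·log((dq(h)/dμ_𝒮)(s)) is μ-integrable. Then ∫ G dμ ≤ KL(μ ‖ μ_𝒮 ⊗ μ_ℋ)/n. -/

import Mathlib

open MeasureTheory ProbabilityTheory Set
open scoped ENNReal

lemma aux_int_log_rnDeriv_nonneg {α : Type*} [MeasurableSpace α] (P Q : Measure α)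
    [IsProbabilityMeasure P] [IsProbabilityMeasure Q] (hPQ : P ≪ Q) (hQP : Q ≪ P)
    (hint : Integrable (fun x => Real.log (P.rnDeriv Q x).toReal) P) :
    0 ≤ ∫ x, Real.log (P.rnDeriv Q x).toReal ∂P := by
  have h1 : (fun x => Real.log (Q.rnDeriv P x).toReal)
      =ᵐ[P] fun x => - Real.log (P.rnDeriv Q x).toReal := by
    filter_upwards [Measure.inv_rnDeriv hPQ] with x hx
    rw [← hx, Pi.inv_apply, ENNReal.toReal_inv, Real.log_inv]
  have hpos : ∀ᵐ x ∂P, 0 < (Q.rnDeriv P x).toReal := by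
    filter_upwards [hPQ.ae_le (Measure.rnDeriv_pos hQP), Measure.rnDeriv_lt_top Q P]
      with x hx1 hx2
    exact ENNReal.toReal_pos hx1.ne' hx2.ne
  have hint2 : Integrable (fun x => (Q.rnDeriv P x).toReal) P :=
    Measure.integrable_toReal_rnDeriv
  have h3 : ∫ x, Real.log (Q.rnDeriv P x).toReal ∂P
      ≤ ∫ x, ((Q.rnDeriv P x).toReal - 1) ∂P := by
    refine integral_mono_ae (hint.neg.congr h1.symm) (hint2.sub (integrable_const 1)) ?_
    filter_upwards [hpos] with x hx
    exact Real.log_le_sub_one_of_pos hx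
  have h4 : ∫ x, ((Q.rnDeriv P x).toReal - 1) ∂P = 0 := by
    rw [integral_sub hint2 (integrable_const 1), Measure.integral_toReal_rnDeriv hQP]
    simp
  have h5 : ∫ x, Real.log (Q.rnDeriv P x).toReal ∂P
      = - ∫ x, Real.log (P.rnDeriv Q x).toReal ∂P := by
    rw [integral_congr_ae h1, integral_neg]
  linarith [h3.trans_eq h4]

lemma aux_ae_eq_compProd {α β : Type*} [MeasurableSpace α] [MeasurableSpace β]
    (m : Measure α) [SFinite m] (k : Kernel α β) [IsSFiniteKernel k]
    {u v : α × β → ℝ} (hu : AEStronglyMeasurable u (m ⊗ₘ k)) (hv : StronglyMeasurable v)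
    (h : ∀ᵐ a ∂m, (fun b => v (a, b)) =ᵐ[k a] fun b => u (a, b)) :
    v =ᵐ[m ⊗ₘ k] u := by
  obtain ⟨u₀, hu₀, huu₀⟩ := hu
  have h2 : ∀ᵐ a ∂m, ∀ᵐ b ∂k a, u (a, b) = u₀ (a, b) :=
    Measure.ae_ae_of_ae_compProd huu₀
  have h3 : v =ᵐ[m ⊗ₘ k] u₀ := by
    refine Measure.ae_compProd_of_ae_ae (measurableSet_eq_fun hv.measurable hu₀.measurable) ?_
    filter_upwards [h, h2] with a ha ha2
    filter_upwards [ha, ha2] with b hb hb2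
    rw [hb, hb2]
  exact h3.trans huu₀.symm

theorem stmt_6 {𝒮 ℋ : Type*} [MeasurableSpace 𝒮] [MeasurableSpace ℋ]
    [StandardBorelSpace 𝒮] [StandardBorelSpace ℋ]
    (μ : Measure (𝒮 × ℋ)) [IsProbabilityMeasure μ]
    (κ : Kernel ℋ 𝒮) [IsMarkovKernel κ] (q : Kernel ℋ 𝒮) [IsMarkovKernel q]
    (hκ : ∀ (A : Set 𝒮) (B : Set ℋ), MeasurableSet A → MeasurableSet B →
      μ (A ×ˢ B) = ∫⁻ h in B, κ h A ∂μ.snd)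
    (n : ℕ) (hn : 1 ≤ n)
    (hac : μ ≪ μ.fst.prod μ.snd)
    (hIint : Integrable (fun z => Real.log ((μ.rnDeriv (μ.fst.prod μ.snd)) z).toReal) μ)
    (hqκ : ∀ᵐ h ∂μ.snd, q h ≪ κ h ∧ κ h ≪ q h ∧ κ h ≪ μ.fst)
    (G : 𝒮 × ℋ → ℝ)
    (hG : ∀ sh, G sh = (1 / (n : ℝ)) * Real.log (((q sh.2).rnDeriv μ.fst sh.1).toReal))
    (hGint : Integrable G μ) :
    ∫ sh, G sh ∂μ ≤ (∫ z, Real.log ((μ.rnDeriv (μ.fst.prod μ.snd)) z).toReal ∂μ) / n := by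
  have hn0 : (n : ℝ) ≠ 0 := Nat.cast_ne_zero.mpr (by omega)
  have hnpos : (0 : ℝ) < n := by positivity
  set base : Measure (𝒮 × ℋ) := μ.fst.prod μ.snd with hbase
  set η : Kernel ℋ 𝒮 := Kernel.const ℋ μ.fst with hηdef
  have hswap : MeasurableEmbedding (Prod.swap : ℋ × 𝒮 → 𝒮 × ℋ) :=
    MeasurableEquiv.prodComm.measurableEmbedding
  -- μ as (swapped) composition product
  have hμeq : μ = (μ.snd ⊗ₘ κ).map Prod.swap := by
    refine ext_of_generate_finite _ generateFrom_prod.symm isPiSystem_prod ?_ ?_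
    · rintro s ⟨A, hA, B, hB, rfl⟩
      rw [hκ A B hA hB, hswap.map_apply, Set.preimage_swap_prod,
        Measure.compProd_apply_prod hB hA]
    · rw [hswap.map_apply]
      simp [measure_univ]
  have hκq : ∀ᵐ h ∂μ.snd, κ h ≪ q h := hqκ.mono fun h hh => hh.2.1
  have hqκ' : ∀ᵐ h ∂μ.snd, q h ≪ κ h := hqκ.mono fun h hh => hh.1
  have hκac : ∀ᵐ h ∂μ.snd, κ h ≪ μ.fst := hqκ.mono fun h hh => hh.2.2
  have hqac : ∀ᵐ h ∂μ.snd, q h ≪ μ.fst := hqκ.mono fun h hh => hh.1.trans hh.2.2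
  set ν : Measure (𝒮 × ℋ) := (μ.snd ⊗ₘ q).map Prod.swap with hνdef
  have hνprob : IsProbabilityMeasure ν :=
    Measure.isProbabilityMeasure_map hswap.measurable.aemeasurable
  have hμν : μ ≪ ν := by
    rw [hμeq]
    exact (Measure.AbsolutelyContinuous.compProd_right hκq).map hswap.measurable
  have hνμ : ν ≪ μ := by
    rw [hμeq]
    exact (Measure.AbsolutelyContinuous.compProd_right hqκ').map hswap.measurable
  have hbase_eq : base = (μ.snd ⊗ₘ η).map Prod.swap := by
    rw [hηdef, Measure.compProd_const, Measure.prod_swap]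
  have hνbase : ν ≪ base := by
    rw [hνdef, hbase_eq]
    refine (Measure.AbsolutelyContinuous.compProd_right ?_).map hswap.measurable
    filter_upwards [hqac] with h hh
    simpa [hηdef] using hh
  -- density of ν with respect to base
  set f : 𝒮 × ℋ → ℝ≥0∞ := fun z => Kernel.rnDeriv q η z.2 z.1 with hfdef
  have hf_meas : Measurable f := (Kernel.measurable_rnDeriv q η).comp measurable_swap
  have hkernel_eq : ∀ᵐ h ∂μ.snd, Kernel.rnDeriv q η h =ᵐ[κ h] (q h).rnDeriv μ.fst := by
    filter_upwards [hκac] with h h3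
    exact h3.ae_le (Kernel.rnDeriv_eq_rnDeriv_measure (κ := q) (η := η) (a := h))
  have hkernel_eq' : ∀ h, Kernel.rnDeriv q η h =ᵐ[μ.fst] (q h).rnDeriv μ.fst := fun h =>
    Kernel.rnDeriv_eq_rnDeriv_measure (κ := q) (η := η) (a := h)
  have hrect : ∀ A B, MeasurableSet A → MeasurableSet B →
      ν (A ×ˢ B) = (base.withDensity f) (A ×ˢ B) := by
    intro A B hA hB
    rw [hνdef, hswap.map_apply, Set.preimage_swap_prod, Measure.compProd_apply_prod hB hA,
      withDensity_apply _ (hA.prod hB), hbase, ← Measure.prod_restrict,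
      lintegral_prod_symm _ hf_meas.aemeasurable]
    refine lintegral_congr_ae (ae_restrict_of_ae ?_)
    filter_upwards [hqac] with h hh
    refine Eq.symm ?_
    calc ∫⁻ s in A, f (s, h) ∂μ.fst
        = ∫⁻ s in A, (q h).rnDeriv μ.fst s ∂μ.fst :=
          lintegral_congr_ae (ae_restrict_of_ae (hkernel_eq' h))
      _ = q h A := Measure.setLIntegral_rnDeriv hh A
  have hνd : ν = base.withDensity f := by
    refine ext_of_generate_finite _ generateFrom_prod.symm isPiSystem_prod ?_ ?_
    · rintro s ⟨A, hA, B, hB, rfl⟩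
      exact hrect A B hA hB
    · simpa [Set.univ_prod_univ] using hrect univ univ MeasurableSet.univ MeasurableSet.univ
  have hfd : ν.rnDeriv base =ᵐ[base] f := by
    rw [hνd]; exact Measure.rnDeriv_withDensity base hf_meas
  -- positivity and finiteness of f, μ-a.e.
  have hf_pos : ∀ᵐ z ∂μ, f z ∈ Set.Ioo (0 : ℝ≥0∞) ∞ := by
    rw [hμeq]
    refine hswap.ae_map_iff.mpr ?_
    refine Measure.ae_compProd_of_ae_ae
      (p := fun x : ℋ × 𝒮 => Kernel.rnDeriv q η x.1 x.2 ∈ Set.Ioo (0 : ℝ≥0∞) ∞)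
      ((Kernel.measurable_rnDeriv q η) measurableSet_Ioo) ?_
    filter_upwards [hqac, hκac, hκq, hkernel_eq] with h h1 h3 h4 he
    have e2 : ∀ᵐ s ∂κ h, 0 < (q h).rnDeriv μ.fst s := h4.ae_le (Measure.rnDeriv_pos h1)
    have e3 : ∀ᵐ s ∂κ h, (q h).rnDeriv μ.fst s < ∞ :=
      h3.ae_le (Measure.rnDeriv_lt_top (q h) μ.fst)
    filter_upwards [he, e2, e3] with s hs1 hs2 hs3
    rw [Set.mem_Ioo, hs1]
    exact ⟨hs2, hs3⟩
  -- connecting f with G, μ-a.e.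
  have hGf : ∀ᵐ z ∂μ, Real.log (f z).toReal = (n : ℝ) * G z := by
    rw [hμeq]
    refine hswap.ae_map_iff.mpr ?_
    have hu : AEStronglyMeasurable (fun x : ℋ × 𝒮 => (n : ℝ) * G x.swap) (μ.snd ⊗ₘ κ) := by
      have h0 : Integrable (fun x : ℋ × 𝒮 => G x.swap) (μ.snd ⊗ₘ κ) :=
        hswap.integrable_map_iff.mp (hμeq ▸ hGint)
      exact (h0.const_mul _).aestronglyMeasurable
    have hv : StronglyMeasurable (fun x : ℋ × 𝒮 => Real.log (f x.swap).toReal) :=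
      (Real.measurable_log.comp (ENNReal.measurable_toReal.comp
        (hf_meas.comp measurable_swap))).stronglyMeasurable
    refine (aux_ae_eq_compProd μ.snd κ hu hv ?_ : _ =ᵐ[μ.snd ⊗ₘ κ] _)
    filter_upwards [hkernel_eq] with h he
    filter_upwards [he] with s hs
    show Real.log (f (s, h)).toReal = (n : ℝ) * G (s, h)
    rw [hG (s, h)]
    have : f (s, h) = (q h).rnDeriv μ.fst s := hs
    rw [this]
    field_simp
  have hlogf_int : Integrable (fun z => Real.log (f z).toReal) μ :=
    (hGint.const_mul _).congr (by filter_upwards [hGf] with z hz; exact hz.symm)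
  have hlogf_eq : ∫ z, Real.log (f z).toReal ∂μ = n * ∫ z, G z ∂μ := by
    have h1 : ∫ z, Real.log (f z).toReal ∂μ = ∫ z, (n : ℝ) * G z ∂μ :=
      integral_congr_ae hGf
    rw [h1, integral_const_mul]
  -- chain rule
  have hchain : ∀ᵐ z ∂μ, Real.log ((μ.rnDeriv base) z).toReal
      = Real.log ((μ.rnDeriv ν) z).toReal + Real.log (f z).toReal := by
    have h1 : μ.rnDeriv ν * ν.rnDeriv base =ᵐ[base] μ.rnDeriv base :=
      Measure.rnDeriv_mul_rnDeriv hμν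
    filter_upwards [hac.ae_le h1, hac.ae_le hfd, Measure.rnDeriv_pos hμν,
      hμν.ae_le (Measure.rnDeriv_lt_top μ ν), hf_pos] with z h1z h2z h3z h4z h5z
    have ha : (μ.rnDeriv ν z).toReal ≠ 0 := (ENNReal.toReal_pos h3z.ne' h4z.ne).ne'
    have hb : (f z).toReal ≠ 0 := (ENNReal.toReal_pos h5z.1.ne' h5z.2.ne).ne'
    show _ = _
    rw [← h1z, Pi.mul_apply, h2z, ENNReal.toReal_mul, Real.log_mul ha hb]
  have hllr_int : Integrable (fun z => Real.log ((μ.rnDeriv ν) z).toReal) μ := by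
    refine (hIint.sub hlogf_int).congr ?_
    filter_upwards [hchain] with z hz
    show Real.log ((μ.rnDeriv base) z).toReal - Real.log (f z).toReal
      = Real.log ((μ.rnDeriv ν) z).toReal
    rw [hz]; ring
  have h0 : 0 ≤ ∫ z, Real.log ((μ.rnDeriv ν) z).toReal ∂μ :=
    aux_int_log_rnDeriv_nonneg μ ν hμν hνμ hllr_int
  have hsplit : ∫ z, Real.log ((μ.rnDeriv base) z).toReal ∂μ
      = ∫ z, Real.log ((μ.rnDeriv ν) z).toReal ∂μ + ∫ z, Real.log (f z).toReal ∂μ := by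
    rw [← integral_add hllr_int hlogf_int]
    exact integral_congr_ae hchain
  rw [le_div_iff₀ hnpos]
  have := hsplit
  rw [hlogf_eq] at this
  linarith
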